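/- For all natural a, b ≥ 1 and k ≥ 3: g_k(3ab) ≥ g_3(a)·g_k(b), where g_k(n) is the maximum size of a k-AP-free subset of {1,...,n}. (Construction: split [1,3ab] into a blocks of length 3b, select blocks indexed by a maximal 3-AP-free subset of [1,a], take the middle third of length b in each selected block, and place a maximal k-AP-free subset of [1,b] in each middle third; the union is k-AP-free.) -/

import Mathlib

/-- A finite set of integers contains no nontrivial `k`-term arithmetic progression. -/
def KAPFree (k : ℕ) (S : Finset ℤ) : Prop :=
  ∀ x d : ℤ, d ≠ 0 → ¬ (∀ i ∈ Finset.range k, x + (i : ℤ) * d ∈ S)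

/-- `gk k n` : maximum size of a subset of `{1,…,n}` with no nontrivial `k`-AP. -/
noncomputable def gk (k n : ℕ) : ℕ :=
  sSup {m | ∃ S ⊆ Finset.Icc (1 : ℤ) n, KAPFree k S ∧ S.card = m}

lemma gk_bddAbove (k n : ℕ) :
    BddAbove {m | ∃ S ⊆ Finset.Icc (1 : ℤ) n, KAPFree k S ∧ S.card = m} := by
  refine ⟨(Finset.Icc (1 : ℤ) n).card, ?_⟩
  rintro m ⟨S, hS, _, rfl⟩
  exact Finset.card_le_card hS

lemma exists_gk (k n : ℕ) (hk : 0 < k) :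
    ∃ S ⊆ Finset.Icc (1 : ℤ) n, KAPFree k S ∧ S.card = gk k n := by
  have hne : {m | ∃ S ⊆ Finset.Icc (1 : ℤ) n, KAPFree k S ∧ S.card = m}.Nonempty := by
    refine ⟨0, ∅, Finset.empty_subset _, ?_, Finset.card_empty⟩
    intro x d hd h
    simpa using h 0 (Finset.mem_range.mpr hk)
  exact Nat.sSup_mem hne (gk_bddAbove k n)

lemma le_gk {k n : ℕ} {S : Finset ℤ} (hS : S ⊆ Finset.Icc (1 : ℤ) n)
    (hfree : KAPFree k S) : S.card ≤ gk k n :=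
  le_csSup (gk_bddAbove k n) ⟨S, hS, hfree, rfl⟩

lemma small_mul_aux {b D δ : ℤ} (hb : 1 ≤ b) (h : 3 * b * D = δ)
    (h1 : -(2 * b) ≤ δ) (h2 : δ ≤ 2 * b) : D = 0 ∧ δ = 0 := by
  have hd : (3 * b) ∣ δ := ⟨D, h.symm⟩
  have hδ : δ = 0 := Int.eq_zero_of_abs_lt_dvd hd (abs_lt.mpr ⟨by linarith, by linarith⟩)
  refine ⟨?_, hδ⟩
  have : 3 * b * D = 0 := by rw [h, hδ]
  rcases mul_eq_zero.mp this with h' | h'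
  · linarith
  · exact h'

theorem gk_supermultiplicative (a b k : ℕ) (ha : 1 ≤ a) (hb : 1 ≤ b) (hk : 3 ≤ k) :
    gk 3 a * gk k b ≤ gk k (3 * a * b) := by
  obtain ⟨A, hA, hAfree, hAcard⟩ := exists_gk 3 a (by norm_num)
  obtain ⟨B, hB, hBfree, hBcard⟩ := exists_gk k b (by omega)
  have hbZ : (1 : ℤ) ≤ (b : ℤ) := by exact_mod_cast hb
  have haZ : (1 : ℤ) ≤ (a : ℤ) := by exact_mod_cast ha
  set f : ℤ × ℤ → ℤ := fun pq => 3 * b * (pq.1 - 1) + b + pq.2 with hf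
  set T : Finset ℤ := (A ×ˢ B).image f with hT
  have hmemA : ∀ p ∈ A, 1 ≤ p ∧ p ≤ (a : ℤ) := by
    intro p hp; have := hA hp; rwa [Finset.mem_Icc] at this
  have hmemB : ∀ q ∈ B, 1 ≤ q ∧ q ≤ (b : ℤ) := by
    intro q hq; have := hB hq; rwa [Finset.mem_Icc] at this
  -- injectivity
  have hinj : Set.InjOn f ↑(A ×ˢ B) := by
    rintro ⟨p, q⟩ hpq ⟨p', q'⟩ hpq' heq
    simp only [Finset.mem_coe, Finset.mem_product] at hpq hpq'
    obtain ⟨hq1, hq2⟩ := hmemB q hpq.2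
    obtain ⟨hq1', hq2'⟩ := hmemB q' hpq'.2
    simp only [hf] at heq
    have h3 : 3 * (b : ℤ) * (p - p') = q' - q := by linear_combination heq
    obtain ⟨hD, hδ⟩ := small_mul_aux hbZ h3 (by linarith) (by linarith)
    have h1 : p = p' := by linarith
    have h2 : q = q' := by linarith
    simp [h1, h2]
  -- subset
  have hTsub : T ⊆ Finset.Icc (1 : ℤ) ((3 * a * b : ℕ) : ℤ) := by
    intro t ht
    rw [hT, Finset.mem_image] at ht
    obtain ⟨⟨p, q⟩, hpq, rfl⟩ := ht
    rw [Finset.mem_product] at hpq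
    obtain ⟨hp1, hp2⟩ := hmemA p hpq.1
    obtain ⟨hq1, hq2⟩ := hmemB q hpq.2
    rw [Finset.mem_Icc]
    simp only [hf]
    push_cast
    have h0 : (0 : ℤ) ≤ 3 * b * (p - 1) := mul_nonneg (by linarith) (by linarith)
    have h1 : 3 * (b : ℤ) * (p - 1) ≤ 3 * b * ((a : ℤ) - 1) :=
      mul_le_mul_of_nonneg_left (by linarith) (by linarith)
    constructor
    · nlinarith
    · nlinarith
  -- k-AP-freeness
  have hfree : KAPFree k T := by
    intro x d hd hall
    have hdec : ∀ i : ℕ, ∃ p q : ℤ,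
        i < k → (p ∈ A ∧ q ∈ B ∧ x + (i : ℤ) * d = 3 * b * (p - 1) + b + q) := by
      intro i
      by_cases hi : i < k
      · have := hall i (Finset.mem_range.mpr hi)
        rw [hT, Finset.mem_image] at this
        obtain ⟨⟨p, q⟩, hpq, heq⟩ := this
        rw [Finset.mem_product] at hpq
        exact ⟨p, q, fun _ => ⟨hpq.1, hpq.2, heq.symm⟩⟩
      · exact ⟨0, 0, fun h => absurd h hi⟩
    choose P Q hPQ using hdec
    have step : ∀ i : ℕ, i + 2 < k →
        P (i + 1) - P i = P (i + 2) - P (i + 1) ∧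
        Q (i + 1) - Q i = Q (i + 2) - Q (i + 1) := by
      intro i hi
      obtain ⟨_, hQ0, hE0⟩ := hPQ i (by omega)
      obtain ⟨_, hQ1, hE1⟩ := hPQ (i + 1) (by omega)
      obtain ⟨_, hQ2, hE2⟩ := hPQ (i + 2) (by omega)
      push_cast at hE0 hE1 hE2
      have h3 : 3 * (b : ℤ) * ((P (i + 1) - P i) - (P (i + 2) - P (i + 1))) =
          (Q (i + 2) - Q (i + 1)) - ((Q (i + 1)) - Q i) := by
        linear_combination hE2 - 2 * hE1 + hE0
      obtain ⟨hq01, hq02⟩ := hmemB _ hQ0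
      obtain ⟨hq11, hq12⟩ := hmemB _ hQ1
      obtain ⟨hq21, hq22⟩ := hmemB _ hQ2
      obtain ⟨hD, hδ⟩ := small_mul_aux hbZ h3 (by linarith) (by linarith)
      constructor <;> linarith
    have hstep : ∀ i : ℕ, i + 1 < k →
        P (i + 1) - P i = P 1 - P 0 ∧ Q (i + 1) - Q i = Q 1 - Q 0 := by
      intro i
      induction i with
      | zero => intro _; exact ⟨rfl, rfl⟩
      | succ n ih =>
        intro h
        obtain ⟨s1, s2⟩ := step n (by omega)
        obtain ⟨t1, t2⟩ := ih (by omega)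
        rw [show n + 1 + 1 = n + 2 from rfl]
        constructor <;> linarith
    have hpos : ∀ i : ℕ, i < k →
        P i = P 0 + (i : ℤ) * (P 1 - P 0) ∧ Q i = Q 0 + (i : ℤ) * (Q 1 - Q 0) := by
      intro i
      induction i with
      | zero => intro _; push_cast; constructor <;> ring
      | succ n ih =>
        intro h
        obtain ⟨s1, s2⟩ := hstep n (by omega)
        obtain ⟨t1, t2⟩ := ih (by omega)
        push_cast
        constructor <;> linarith
    by_cases hD : P 1 - P 0 = 0
    · -- all blocks equal : nontrivial k-AP in B
      have hE : Q 1 - Q 0 = d := by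
        obtain ⟨_, _, hE0⟩ := hPQ 0 (by omega)
        obtain ⟨_, _, hE1⟩ := hPQ 1 (by omega)
        push_cast at hE0 hE1
        have : 3 * (b : ℤ) * (P 1 - P 0) + (Q 1 - Q 0) = d := by
          linear_combination hE0 - hE1
        rw [hD] at this; linarith
      refine hBfree (Q 0) d hd ?_
      intro i hi
      rw [Finset.mem_range] at hi
      obtain ⟨h1, h2⟩ := hpos i hi
      obtain ⟨_, hQi, _⟩ := hPQ i hi
      rw [hE] at h2
      rwa [← h2]
    · -- blocks form a nontrivial 3-AP in A
      refine hAfree (P 0) (P 1 - P 0) hD ?_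
      intro i hi
      rw [Finset.mem_range] at hi
      have hik : i < k := by omega
      obtain ⟨h1, _⟩ := hpos i hik
      obtain ⟨hPi, _, _⟩ := hPQ i hik
      rwa [← h1]
  -- conclude
  have hcard : T.card = gk 3 a * gk k b := by
    rw [hT, Finset.card_image_of_injOn hinj, Finset.card_product, hAcard, hBcard]
  calc gk 3 a * gk k b = T.card := hcard.symm
    _ ≤ gk k (3 * a * b) := le_gk hTsub hfree
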